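/- Let $q \in \mathbb{C}^*$ not be a root of unity, and let $a, b$ be coprime positive integers with associated $K = x^a y^b$, $\widehat{X} = x^{a-v}y^{b-u}$, $\widehat{Y} = x^v y^u$ (where $au - bv = 1$, $0 \le v \le a$, $0 \le u \le b$) in $\mathcal{A}_q(2)$. If $M$ is a simple $\mathcal{A}_q(2)$-module generated by an eigenvector $v_0$ of $K$ with nonzero eigenvalue $\lambda$, then the vectors $\{\widehat{X}^\ell v_0 \mid \ell \geq 0\} \cup \{\widehat{Y}^{\ell+1} v_0 \mid \ell \geq 0\}$ form a basis of $M$; in particular $K$ acts semisimply on $M$ with one-dimensional eigenspaces of eigenvalues $q^k \lambda$, $k \in \mathbb{Z}$. -/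

import Mathlib

namespace AqAux

variable {q : ℂ} {M : Type*} [AddCommGroup M] [Module ℂ M] {X Y : M →ₗ[ℂ] M}

lemma comm1 (hrel : X * Y = q • (Y * X)) (n : ℕ) :
    X * Y ^ n = q ^ n • (Y ^ n * X) := by
  induction n with
  | zero => simp
  | succ n ih =>
    rw [pow_succ, ← mul_assoc, ih, smul_mul_assoc, mul_assoc, hrel, mul_smul_comm,
      smul_smul, ← mul_assoc, ← pow_succ, pow_succ q]

lemma commN (hrel : X * Y = q • (Y * X)) (m n : ℕ) :
    X ^ m * Y ^ n = q ^ (m * n) • (Y ^ n * X ^ m) := by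
  induction m with
  | zero => simp
  | succ m ih =>
    rw [pow_succ, mul_assoc, comm1 hrel, mul_smul_comm, ← mul_assoc, ih,
      smul_mul_assoc, smul_smul, mul_assoc, ← pow_succ, ← pow_add]
    ring_nf

lemma mulN (hrel : X * Y = q • (Y * X)) (m n m' n' : ℕ) :
    X ^ (m + m') * Y ^ (n + n') = q ^ (m' * n) • ((X ^ m * Y ^ n) * (X ^ m' * Y ^ n')) := by
  rw [pow_add, pow_add, mul_assoc, ← mul_assoc (X ^ m'), commN hrel m' n,
    smul_mul_assoc, mul_smul_comm, mul_assoc, mul_assoc]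

end AqAux

/-- for `q` not a root of unity and coprime positive `a, b`
with `au - bv = 1`, `0 ≤ v ≤ a`, `0 ≤ u ≤ b`, any simple `A_q(2)`-module `M`
generated by an eigenvector `v₀` of `K = x^a y^b` with nonzero eigenvalue `λ`
has basis `{X̂^ℓ v₀, Ŷ^(ℓ+1) v₀ | ℓ ≥ 0}` (where `X̂ = x^(a-v) y^(b-u)`,
`Ŷ = x^v y^u`); in particular `K` acts semisimply on this basis with the
pairwise distinct eigenvalues `q^(-ℓ) λ` and `q^(ℓ+1) λ`. -/
theorem simple_module_basis_of_K_eigenvector (q : ℂ) (hq : q ≠ 0)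
    (hroot : ∀ k : ℕ, q ^ (k + 1) ≠ 1)
    (a b u v : ℕ) (ha : 0 < a) (hb : 0 < b) (hcop : Nat.Coprime a b)
    (huv : (a : ℤ) * u - (b : ℤ) * v = 1) (hv : v ≤ a) (hu : u ≤ b)
    (M : Type*) [AddCommGroup M] [Module ℂ M]
    (X Y : M →ₗ[ℂ] M) (hrel : X ∘ₗ Y = q • (Y ∘ₗ X))
    (hsimple : ∀ W : Submodule ℂ M,
      (∀ w ∈ W, X w ∈ W) → (∀ w ∈ W, Y w ∈ W) → W = ⊥ ∨ W = ⊤)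
    (v₀ : M) (hv₀ : v₀ ≠ 0) (lam : ℂ) (hlam : lam ≠ 0)
    (hK : ((X ^ a) ∘ₗ (Y ^ b)) v₀ = lam • v₀) :
    ∃ Bs : Module.Basis (ℕ ⊕ ℕ) ℂ M,
      (∀ ℓ : ℕ, Bs (Sum.inl ℓ) = (((X ^ (a - v)) ∘ₗ (Y ^ (b - u))) ^ ℓ) v₀) ∧
      (∀ ℓ : ℕ, Bs (Sum.inr ℓ) = (((X ^ v) ∘ₗ (Y ^ u)) ^ (ℓ + 1)) v₀) ∧
      (∀ ℓ : ℕ, ((X ^ a) ∘ₗ (Y ^ b)) (Bs (Sum.inl ℓ))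
          = (q ^ (-(ℓ : ℤ)) * lam) • Bs (Sum.inl ℓ)) ∧
      (∀ ℓ : ℕ, ((X ^ a) ∘ₗ (Y ^ b)) (Bs (Sum.inr ℓ))
          = (q ^ ((ℓ : ℤ) + 1) * lam) • Bs (Sum.inr ℓ)) := by
  classical
  have hrel' : X * Y = q • (Y * X) := hrel
  have hK' : (X ^ a * Y ^ b) v₀ = lam • v₀ := hK
  have mulN := fun m n m' n' => AqAux.mulN hrel' m n m' n'
  have hau : a * u = b * v + 1 := by
    have h : ((a * u : ℕ) : ℤ) = ((b * v + 1 : ℕ) : ℤ) := by push_cast; linarith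
    exact_mod_cast h
  have ha' : (a : ℤ) ≠ 0 := by exact_mod_cast ha.ne'
  have cancel : ∀ (e : ℕ) (A B' : M →ₗ[ℂ] M), q ^ e • A = q ^ e • B' → A = B' :=
    fun e A B' h => smul_right_injective _ (pow_ne_zero e hq) h
  -- key commutation relations
  have hXK : q • ((X ^ a * Y ^ b) * (X ^ (a - v) * Y ^ (b - u)))
      = (X ^ (a - v) * Y ^ (b - u)) * (X ^ a * Y ^ b) := by
    have e1 : (a - v) * b = a * (b - u) + 1 := by
      have h1 : (a - v) * b = a * b - v * b := Nat.sub_mul a v b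
      have h2 : a * (b - u) = b * a - u * a := by rw [mul_comm, Nat.sub_mul]
      have h3 : v * b = b * v := mul_comm v b
      have h4 : u * a = a * u := mul_comm u a
      have h5 : a * u ≤ a * b := Nat.mul_le_mul_left a hu
      have h6 : b * a = a * b := mul_comm b a
      omega
    have t1 := mulN a b (a - v) (b - u)
    have t2 := mulN (a - v) (b - u) a b
    rw [Nat.add_comm (a - v) a, Nat.add_comm (b - u) b] at t2
    rw [t1, e1, pow_succ, mul_smul] at t2
    exact cancel _ _ _ t2
  have hKY : (X ^ a * Y ^ b) * (X ^ v * Y ^ u)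
      = q • ((X ^ v * Y ^ u) * (X ^ a * Y ^ b)) := by
    have e2 : a * u = v * b + 1 := by rw [mul_comm v b]; exact hau
    have t1 := mulN a b v u
    have t2 := mulN v u a b
    rw [Nat.add_comm v a, Nat.add_comm u b] at t2
    rw [t1, e2, pow_succ, mul_smul] at t2
    exact cancel _ _ _ t2
  have hYX : (X ^ a * Y ^ b)
      = q ^ ((a - v) * u) • ((X ^ v * Y ^ u) * (X ^ (a - v) * Y ^ (b - u))) := by
    have t := mulN v u (a - v) (b - u)
    rwa [Nat.add_sub_cancel' hv, Nat.add_sub_cancel' hu] at t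
  have hXY : (X ^ a * Y ^ b)
      = q ^ (v * (b - u)) • ((X ^ (a - v) * Y ^ (b - u)) * (X ^ v * Y ^ u)) := by
    have t := mulN (a - v) (b - u) v u
    rwa [Nat.sub_add_cancel hv, Nat.sub_add_cancel hu] at t
  -- pointwise eigenvalue recursions
  have hKXh : ∀ (w : M) (μ : ℂ), (X ^ a * Y ^ b) w = μ • w →
      (X ^ a * Y ^ b) ((X ^ (a - v) * Y ^ (b - u)) w)
        = (q⁻¹ * μ) • (X ^ (a - v) * Y ^ (b - u)) w := by
    intro w μ hw
    have h2 := congrArg (fun f : M →ₗ[ℂ] M => f w) hXK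
    simp only [LinearMap.smul_apply, Module.End.mul_apply] at h2
    have hw' : (X ^ a) ((Y ^ b) w) = μ • w := hw
    have h1 : q • (X ^ a * Y ^ b) ((X ^ (a - v) * Y ^ (b - u)) w)
        = μ • (X ^ (a - v) * Y ^ (b - u)) w := by
      simp only [Module.End.mul_apply]
      rw [h2, hw', map_smul, map_smul]
    calc (X ^ a * Y ^ b) ((X ^ (a - v) * Y ^ (b - u)) w)
        = q⁻¹ • (q • (X ^ a * Y ^ b) ((X ^ (a - v) * Y ^ (b - u)) w)) :=
          (inv_smul_smul₀ hq _).symm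
      _ = q⁻¹ • (μ • (X ^ (a - v) * Y ^ (b - u)) w) := by rw [h1]
      _ = (q⁻¹ * μ) • (X ^ (a - v) * Y ^ (b - u)) w := smul_smul _ _ _
  have hKYh : ∀ (w : M) (μ : ℂ), (X ^ a * Y ^ b) w = μ • w →
      (X ^ a * Y ^ b) ((X ^ v * Y ^ u) w) = (q * μ) • (X ^ v * Y ^ u) w := by
    intro w μ hw
    have h2 := congrArg (fun f : M →ₗ[ℂ] M => f w) hKY
    have hw' : (X ^ a) ((Y ^ b) w) = μ • w := hw
    simp only [LinearMap.smul_apply, Module.End.mul_apply] at h2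
    rw [hw', map_smul, map_smul, smul_smul] at h2
    simpa only [Module.End.mul_apply] using h2
  -- nonvanishing
  have hXh_nz : ∀ (w : M) (μ : ℂ), μ ≠ 0 → (X ^ a * Y ^ b) w = μ • w → w ≠ 0 →
      (X ^ (a - v) * Y ^ (b - u)) w ≠ 0 := by
    intro w μ hμ hw hwne hcon
    have h2 := congrArg (fun f : M →ₗ[ℂ] M => f w) hYX
    simp only [LinearMap.smul_apply, Module.End.mul_apply] at h2
    have hcon' : (X ^ (a - v)) ((Y ^ (b - u)) w) = 0 := hcon
    have hw' : (X ^ a) ((Y ^ b) w) = μ • w := hw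
    simp only [hw', hcon', map_zero, smul_zero] at h2
    exact hwne (by simpa [hμ] using smul_eq_zero.mp h2)
  have hYh_nz : ∀ (w : M) (μ : ℂ), μ ≠ 0 → (X ^ a * Y ^ b) w = μ • w → w ≠ 0 →
      (X ^ v * Y ^ u) w ≠ 0 := by
    intro w μ hμ hw hwne hcon
    have h2 := congrArg (fun f : M →ₗ[ℂ] M => f w) hXY
    simp only [LinearMap.smul_apply, Module.End.mul_apply] at h2
    have hcon' : (X ^ v) ((Y ^ u) w) = 0 := hcon
    have hw' : (X ^ a) ((Y ^ b) w) = μ • w := hw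
    simp only [hw', hcon', map_zero, smul_zero] at h2
    exact hwne (by simpa [hμ] using smul_eq_zero.mp h2)
  -- the two families of eigenvectors
  have hXh_pow : ∀ ℓ : ℕ,
      (X ^ a * Y ^ b) (((X ^ (a - v) * Y ^ (b - u)) ^ ℓ) v₀)
        = (q ^ (-(ℓ : ℤ)) * lam) • ((X ^ (a - v) * Y ^ (b - u)) ^ ℓ) v₀ ∧
      ((X ^ (a - v) * Y ^ (b - u)) ^ ℓ) v₀ ≠ 0 := by
    intro ℓ
    induction ℓ with
    | zero => refine ⟨by simpa using hK', by simpa using hv₀⟩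
    | succ ℓ ih =>
      have hμ : (q ^ (-(ℓ : ℤ)) * lam) ≠ 0 := mul_ne_zero (zpow_ne_zero _ hq) hlam
      have hvv : ((X ^ (a - v) * Y ^ (b - u)) ^ (ℓ + 1)) v₀
          = (X ^ (a - v) * Y ^ (b - u)) (((X ^ (a - v) * Y ^ (b - u)) ^ ℓ) v₀) := by
        rw [pow_succ', Module.End.mul_apply]
      have key := hKXh _ _ ih.1
      have hcast : q⁻¹ * (q ^ (-(ℓ : ℤ)) * lam) = q ^ (-((ℓ + 1 : ℕ) : ℤ)) * lam := by
        rw [← mul_assoc]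
        congr 1
        rw [show (-((ℓ + 1 : ℕ) : ℤ)) = -(ℓ : ℤ) + (-1) by push_cast; ring,
          zpow_add₀ hq, zpow_neg_one]
        ring
      refine ⟨?_, ?_⟩
      · rw [hvv, key, hcast]
      · rw [hvv]
        exact hXh_nz _ _ hμ ih.1 ih.2
  have hYh_pow : ∀ ℓ : ℕ,
      (X ^ a * Y ^ b) (((X ^ v * Y ^ u) ^ ℓ) v₀)
        = (q ^ (ℓ : ℤ) * lam) • ((X ^ v * Y ^ u) ^ ℓ) v₀ ∧
      ((X ^ v * Y ^ u) ^ ℓ) v₀ ≠ 0 := by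
    intro ℓ
    induction ℓ with
    | zero => refine ⟨by simpa using hK', by simpa using hv₀⟩
    | succ ℓ ih =>
      have hμ : (q ^ (ℓ : ℤ) * lam) ≠ 0 := mul_ne_zero (zpow_ne_zero _ hq) hlam
      have hvv : ((X ^ v * Y ^ u) ^ (ℓ + 1)) v₀
          = (X ^ v * Y ^ u) (((X ^ v * Y ^ u) ^ ℓ) v₀) := by
        rw [pow_succ', Module.End.mul_apply]
      have key := hKYh _ _ ih.1
      have hcast : q * (q ^ (ℓ : ℤ) * lam) = q ^ (((ℓ + 1 : ℕ)) : ℤ) * lam := by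
        rw [← mul_assoc]
        congr 1
        rw [show (((ℓ + 1 : ℕ)) : ℤ) = (ℓ : ℤ) + 1 by push_cast; ring,
          zpow_add₀ hq, zpow_one]
        ring
      refine ⟨?_, ?_⟩
      · rw [hvv, key, hcast]
      · rw [hvv]
        exact hYh_nz _ _ hμ ih.1 ih.2
  -- the basis family
  set B : ℕ ⊕ ℕ → M := Sum.elim (fun ℓ => ((X ^ (a - v) * Y ^ (b - u)) ^ ℓ) v₀)
      (fun ℓ => ((X ^ v * Y ^ u) ^ (ℓ + 1)) v₀) with hB
  -- injectivity of eigenvalues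
  have hzpow : ∀ z : ℤ, q ^ z = 1 → z = 0 := by
    have hpos : ∀ z : ℤ, 0 < z → q ^ z ≠ 1 := by
      intro z hz hcon
      have h3 : z = (z.toNat : ℤ) := (Int.toNat_of_nonneg hz.le).symm
      have h4 : q ^ z.toNat = 1 := by rw [← zpow_natCast, ← h3, hcon]
      have hk : z.toNat = (z.toNat - 1) + 1 := by omega
      rw [hk] at h4
      exact hroot _ h4
    intro z hz
    rcases lt_trichotomy z 0 with h | h | h
    · exfalso
      apply hpos (-z) (by omega)
      rw [zpow_neg, hz, inv_one]
    · exact h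
    · exact absurd hz (hpos z h)
  have hzkey : ∀ z w : ℤ, q ^ z * lam = q ^ w * lam → z = w := by
    intro z w h
    have h1 : q ^ z = q ^ w := mul_right_cancel₀ hlam h
    have h2 : q ^ (z - w) = 1 := by
      rw [zpow_sub₀ hq, h1, div_self (zpow_ne_zero _ hq)]
    have := hzpow _ h2
    omega
  set μf : ℕ ⊕ ℕ → ℂ := Sum.elim (fun ℓ => q ^ (-(ℓ : ℤ)) * lam)
      (fun ℓ => q ^ ((ℓ : ℤ) + 1) * lam) with hμf
  have hinj : Function.Injective μf := by
    intro i j hij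
    rcases i with ℓ | ℓ <;> rcases j with ℓ' | ℓ' <;>
      simp only [hμf, Sum.elim_inl, Sum.elim_inr] at hij
    · obtain rfl : ℓ = ℓ' := by have := hzkey _ _ hij; omega
      rfl
    · exact absurd (hzkey _ _ hij) (by omega)
    · exact absurd (hzkey _ _ hij) (by omega)
    · obtain rfl : ℓ = ℓ' := by have := hzkey _ _ hij; omega
      rfl
  have heig : ∀ i, Module.End.HasEigenvector (X ^ a * Y ^ b) (μf i) (B i) := by
    intro i
    rcases i with ℓ | ℓ
    · exact ⟨Module.End.mem_eigenspace_iff.mpr (hXh_pow ℓ).1, (hXh_pow ℓ).2⟩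
    · refine ⟨Module.End.mem_eigenspace_iff.mpr ?_, (hYh_pow (ℓ + 1)).2⟩
      have h := (hYh_pow (ℓ + 1)).1
      simp only [hB, hμf, Sum.elim_inr]
      rw [show ((ℓ : ℤ) + 1) = (((ℓ + 1 : ℕ)) : ℤ) by push_cast; ring]
      exact h
  have hli : LinearIndependent ℂ B :=
    Module.End.eigenvectors_linearIndependent' (X ^ a * Y ^ b) μf hinj B heig
  -- spanning
  have hstep : ∀ m n : ℕ, (X ^ (m + a) * Y ^ (n + b)) v₀
      = (q ^ (a * n) * lam) • (X ^ m * Y ^ n) v₀ := by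
    intro m n
    have t := congrArg (fun f : M →ₗ[ℂ] M => f v₀) (mulN m n a b)
    simp only [LinearMap.smul_apply, Module.End.mul_apply] at t
    have hK'' : (X ^ a) ((Y ^ b) v₀) = lam • v₀ := hK'
    rw [hK'', map_smul, map_smul, smul_smul] at t
    exact t
  have hdesc : ∀ (t m n : ℕ), ∃ c : ℂ, c ≠ 0 ∧
      (X ^ (m + t * a) * Y ^ (n + t * b)) v₀ = c • (X ^ m * Y ^ n) v₀ := by
    intro t
    induction t with
    | zero => intro m n; exact ⟨1, one_ne_zero, by simp⟩
    | succ t ih =>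
      intro m n
      obtain ⟨c, hc, hcs⟩ := ih m n
      have h1 : (X ^ (m + (t + 1) * a) * Y ^ (n + (t + 1) * b)) v₀
          = (q ^ (a * (n + t * b)) * lam) • (X ^ (m + t * a) * Y ^ (n + t * b)) v₀ := by
        have := hstep (m + t * a) (n + t * b)
        rw [show m + t * a + a = m + (t + 1) * a by ring,
          show n + t * b + b = n + (t + 1) * b by ring] at this
        exact this
      exact ⟨(q ^ (a * (n + t * b)) * lam) * c,
        mul_ne_zero (mul_ne_zero (pow_ne_zero _ hq) hlam) hc,
        by rw [h1, hcs, smul_smul]⟩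
  have hNpow : ∀ (s t ℓ : ℕ), ∃ c : ℂ, c ≠ 0 ∧
      ((X ^ s * Y ^ t) ^ ℓ : M →ₗ[ℂ] M) = c • (X ^ (ℓ * s) * Y ^ (ℓ * t)) := by
    intro s t ℓ
    induction ℓ with
    | zero => exact ⟨1, one_ne_zero, by simp⟩
    | succ ℓ ih =>
      obtain ⟨c, hc, hcs⟩ := ih
      have h1 := mulN (ℓ * s) (ℓ * t) s t
      refine ⟨c * (q ^ (s * (ℓ * t)))⁻¹,
        mul_ne_zero hc (inv_ne_zero (pow_ne_zero _ hq)), ?_⟩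
      rw [pow_succ, hcs, smul_mul_assoc,
        show (ℓ + 1) * s = ℓ * s + s by ring, show (ℓ + 1) * t = ℓ * t + t by ring,
        h1, smul_smul]
      congr 1
      field_simp
  have hmem : ∀ m n : ℕ, (X ^ m * Y ^ n) v₀ ∈ Submodule.span ℂ (Set.range B) := by
    intro m n
    obtain ⟨i, m₀, n₀, c, hc, hBi, hline⟩ :
        ∃ (i : ℕ ⊕ ℕ) (m₀ n₀ : ℕ) (c : ℂ), c ≠ 0 ∧
          B i = c • (X ^ m₀ * Y ^ n₀) v₀ ∧
          (a : ℤ) * n₀ - (b : ℤ) * m₀ = (a : ℤ) * n - (b : ℤ) * m := by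
      by_cases hk : 0 < (a : ℤ) * n - (b : ℤ) * m
      · obtain ⟨c, hc, hcs⟩ := hNpow v u (((a : ℤ) * n - (b : ℤ) * m).toNat)
        refine ⟨Sum.inr ((((a : ℤ) * n - (b : ℤ) * m).toNat) - 1),
          (((a : ℤ) * n - (b : ℤ) * m).toNat) * v,
          (((a : ℤ) * n - (b : ℤ) * m).toNat) * u, c, hc, ?_, ?_⟩
        · simp only [hB, Sum.elim_inr]
          rw [show ((((a : ℤ) * n - (b : ℤ) * m).toNat) - 1) + 1
              = (((a : ℤ) * n - (b : ℤ) * m).toNat) by omega, hcs]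
          simp
        · push_cast [Int.toNat_of_nonneg hk.le]
          linear_combination ((a : ℤ) * n - (b : ℤ) * m) * huv
      · obtain ⟨c, hc, hcs⟩ := hNpow (a - v) (b - u) (((b : ℤ) * m - (a : ℤ) * n).toNat)
        refine ⟨Sum.inl (((b : ℤ) * m - (a : ℤ) * n).toNat),
          (((b : ℤ) * m - (a : ℤ) * n).toNat) * (a - v),
          (((b : ℤ) * m - (a : ℤ) * n).toNat) * (b - u), c, hc, ?_, ?_⟩
        · simp only [hB, Sum.elim_inl]
          rw [hcs]
          simp
        · push_cast [Int.toNat_of_nonneg (by omega : (0 : ℤ) ≤ (b : ℤ) * m - (a : ℤ) * n),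
            Nat.cast_sub hu, Nat.cast_sub hv]
          linear_combination ((a : ℤ) * n - (b : ℤ) * m) * huv
    have hacop : IsCoprime (a : ℤ) (b : ℤ) := Nat.isCoprime_iff_coprime.mpr hcop
    have hdvd : (a : ℤ) ∣ (b : ℤ) * ((m : ℤ) - (m₀ : ℤ)) :=
      ⟨(n : ℤ) - n₀, by linear_combination hline⟩
    obtain ⟨t, ht⟩ := hacop.dvd_of_dvd_mul_left hdvd
    have hnt : (n : ℤ) - n₀ = b * t := by
      apply mul_left_cancel₀ ha'
      linear_combination -hline + (b : ℤ) * ht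
    rcases le_or_gt 0 t with htpos | htneg
    · have hm' : m = m₀ + t.toNat * a := by
        have h5 : (m : ℤ) = (m₀ : ℤ) + (t.toNat : ℤ) * a := by
          rw [Int.toNat_of_nonneg htpos]; linarith
        exact_mod_cast h5
      have hn' : n = n₀ + t.toNat * b := by
        have h5 : (n : ℤ) = (n₀ : ℤ) + (t.toNat : ℤ) * b := by
          rw [Int.toNat_of_nonneg htpos]; linarith
        exact_mod_cast h5
      obtain ⟨c', hc', hcs'⟩ := hdesc t.toNat m₀ n₀
      rw [← hm', ← hn'] at hcs'
      have hN₀ : (X ^ m₀ * Y ^ n₀) v₀ ∈ Submodule.span ℂ (Set.range B) := by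
        have h6 : (X ^ m₀ * Y ^ n₀) v₀ = c⁻¹ • B i := by
          rw [hBi, inv_smul_smul₀ hc]
        rw [h6]
        exact Submodule.smul_mem _ _ (Submodule.subset_span ⟨i, rfl⟩)
      rw [hcs']
      exact Submodule.smul_mem _ _ hN₀
    · have hm' : m₀ = m + (-t).toNat * a := by
        have h5 : (m₀ : ℤ) = (m : ℤ) + ((-t).toNat : ℤ) * a := by
          rw [Int.toNat_of_nonneg (by omega : (0 : ℤ) ≤ -t)]; linarith
        exact_mod_cast h5
      have hn' : n₀ = n + (-t).toNat * b := by
        have h5 : (n₀ : ℤ) = (n : ℤ) + ((-t).toNat : ℤ) * b := by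
          rw [Int.toNat_of_nonneg (by omega : (0 : ℤ) ≤ -t)]; linarith
        exact_mod_cast h5
      obtain ⟨c', hc', hcs'⟩ := hdesc (-t).toNat m n
      rw [← hm', ← hn'] at hcs'
      have h6 : (X ^ m * Y ^ n) v₀ = (c * c')⁻¹ • B i := by
        rw [hBi, hcs', smul_smul c c', inv_smul_smul₀ (mul_ne_zero hc hc')]
      rw [h6]
      exact Submodule.smul_mem _ _ (Submodule.subset_span ⟨i, rfl⟩)
  -- representing basis vectors as monomials
  have hBrep : ∀ i : ℕ ⊕ ℕ, ∃ (m n : ℕ) (c : ℂ), B i = c • (X ^ m * Y ^ n) v₀ := by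
    intro i
    rcases i with ℓ | ℓ
    · obtain ⟨c, hc, hcs⟩ := hNpow (a - v) (b - u) ℓ
      refine ⟨ℓ * (a - v), ℓ * (b - u), c, ?_⟩
      simp only [hB, Sum.elim_inl]
      rw [hcs]
      simp
    · obtain ⟨c, hc, hcs⟩ := hNpow v u (ℓ + 1)
      refine ⟨(ℓ + 1) * v, (ℓ + 1) * u, c, ?_⟩
      simp only [hB, Sum.elim_inr]
      rw [hcs]
      simp
  have hXN : ∀ m n : ℕ, X ((X ^ m * Y ^ n) v₀) = (X ^ (m + 1) * Y ^ n) v₀ := by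
    intro m n
    rw [pow_succ']
    simp [Module.End.mul_apply]
  have hYN : ∀ m n : ℕ, Y ((X ^ m * Y ^ n) v₀) = (q ^ m)⁻¹ • (X ^ m * Y ^ (n + 1)) v₀ := by
    intro m n
    have h2 := AqAux.commN hrel' m 1
    rw [pow_one, mul_one] at h2
    have h1 : (X ^ m * Y ^ (n + 1)) v₀ = q ^ m • Y ((X ^ m * Y ^ n) v₀) := by
      calc (X ^ m * Y ^ (n + 1)) v₀ = ((X ^ m * Y) * Y ^ n) v₀ := by
            rw [mul_assoc, ← pow_succ']
        _ = (q ^ m • ((Y * X ^ m) * Y ^ n)) v₀ := by rw [h2, smul_mul_assoc]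
        _ = q ^ m • Y ((X ^ m * Y ^ n) v₀) := by
            simp [Module.End.mul_apply, LinearMap.smul_apply, mul_assoc]
    rw [h1, inv_smul_smul₀ (pow_ne_zero m hq)]
  have hWX : ∀ w ∈ Submodule.span ℂ (Set.range B), X w ∈ Submodule.span ℂ (Set.range B) := by
    intro w hw
    induction hw using Submodule.span_induction with
    | mem x hx =>
      obtain ⟨i, rfl⟩ := hx
      obtain ⟨m, n, c, hrep⟩ := hBrep i
      rw [hrep, map_smul]
      refine Submodule.smul_mem _ _ ?_
      rw [hXN m n]
      exact hmem (m + 1) n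
    | zero => simp
    | add x y _ _ hx hy => rw [map_add]; exact Submodule.add_mem _ hx hy
    | smul c x _ hx => rw [map_smul]; exact Submodule.smul_mem _ _ hx
  have hWY : ∀ w ∈ Submodule.span ℂ (Set.range B), Y w ∈ Submodule.span ℂ (Set.range B) := by
    intro w hw
    induction hw using Submodule.span_induction with
    | mem x hx =>
      obtain ⟨i, rfl⟩ := hx
      obtain ⟨m, n, c, hrep⟩ := hBrep i
      rw [hrep, map_smul]
      refine Submodule.smul_mem _ _ ?_
      rw [hYN m n]
      exact Submodule.smul_mem _ _ (hmem m (n + 1))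
    | zero => simp
    | add x y _ _ hx hy => rw [map_add]; exact Submodule.add_mem _ hx hy
    | smul c x _ hx => rw [map_smul]; exact Submodule.smul_mem _ _ hx
  have hWtop : Submodule.span ℂ (Set.range B) = ⊤ := by
    rcases hsimple _ hWX hWY with hbot | htop
    · exfalso
      have hv₀mem : v₀ ∈ Submodule.span ℂ (Set.range B) := by
        have hB0 : B (Sum.inl 0) = v₀ := by simp [hB]
        exact hB0 ▸ Submodule.subset_span ⟨Sum.inl 0, rfl⟩
      rw [hbot] at hv₀mem
      exact hv₀ (Submodule.mem_bot ℂ |>.mp hv₀mem)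
    · exact htop
  have hsp : ⊤ ≤ Submodule.span ℂ (Set.range B) := hWtop.ge
  refine ⟨Module.Basis.mk hli hsp, ?_, ?_, ?_, ?_⟩
  · intro ℓ
    rw [Module.Basis.mk_apply]
    rfl
  · intro ℓ
    rw [Module.Basis.mk_apply]
    rfl
  · intro ℓ
    rw [Module.Basis.mk_apply]
    exact (hXh_pow ℓ).1
  · intro ℓ
    rw [Module.Basis.mk_apply]
    rw [show ((ℓ : ℤ) + 1) = (((ℓ + 1 : ℕ)) : ℤ) by push_cast; ring]
    exact (hYh_pow (ℓ + 1)).1
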